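/- Let D be a squarefree positive integer with an even number of distinct prime factors and let N be a positive integer with gcd(D, N) = 1. Then there exists a positive integer L with L < 8DN such that: the Legendre symbol (L|p) equals −1 for every odd prime p dividing D; the Legendre symbol (L|p) equals 1 for every odd prime p dividing N; and L ≡ 5 (mod 8) if D is even, while L ≡ 1 (mod 8) if D is odd. -/

import Mathlib

open Nat

/-- For an odd prime `p` there is a natural number that is a nonzero nonsquare mod `p`. -/
lemma exists_nonsquare_nat (p : ℕ) (hp : p.Prime) (hp2 : p ≠ 2) :
    ∃ b : ℕ, ((b : ZMod p) ≠ 0 ∧ ¬ IsSquare ((b : ℕ) : ZMod p)) := by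
  haveI : Fact p.Prime := ⟨hp⟩
  obtain ⟨a, ha⟩ := FiniteField.exists_nonsquare (F := ZMod p)
    (by rwa [ZMod.ringChar_zmod_n])
  refine ⟨a.val, ?_, ?_⟩
  · rw [ZMod.natCast_zmod_val]
    rintro rfl; exact ha ⟨0, by simp⟩
  · rwa [ZMod.natCast_zmod_val]

/-- For `D` a squarefree positive integer with an even number of distinct
prime factors and `N` a positive integer coprime to `D`, there is a positive integer
`L < 8DN` with `(L|p) = -1` for all odd primes `p ∣ D`, `(L|p) = 1` for all odd primes
`p ∣ N`, and `L ≡ 5 (mod 8)` if `D` is even while `L ≡ 1 (mod 8)` if `D` is odd. -/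
theorem exists_heegner_residue (D N : ℕ) (hDpos : 0 < D) (hDsf : Squarefree D)
    (hDeven : Even D.primeFactors.card) (hNpos : 0 < N) (hgcd : Nat.gcd D N = 1) :
    ∃ L : ℕ, 0 < L ∧ L < 8 * D * N ∧
      (∀ p : ℕ, (hp : p.Prime) → Odd p → p ∣ D → @legendreSym p ⟨hp⟩ (L : ℤ) = -1) ∧
      (∀ p : ℕ, (hp : p.Prime) → Odd p → p ∣ N → @legendreSym p ⟨hp⟩ (L : ℤ) = 1) ∧
      (2 ∣ D → L % 8 = 5) ∧ (¬ 2 ∣ D → L % 8 = 1) := by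
  classical
  have hDN : D * N ≠ 0 := by positivity
  set c8 : ℕ := if 2 ∣ D then 5 else 1 with hc8
  -- the residue we want at each modulus
  set a : ℕ → ℕ := fun p =>
    if h : p.Prime ∧ p ≠ 2 ∧ p ∣ D then (exists_nonsquare_nat p h.1 h.2.1).choose
    else if p = 8 then c8 else 1 with ha
  set S : Finset ℕ := (D * N).primeFactors.erase 2 with hS
  have h8S : (8 : ℕ) ∉ S := by
    intro h
    exact (by norm_num : ¬ Nat.Prime 8) (Nat.prime_of_mem_primeFactors (Finset.mem_of_mem_erase h))
  set t : Finset ℕ := insert 8 S with ht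
  have hSprime : ∀ p ∈ S, p.Prime ∧ p ≠ 2 := fun p hp =>
    ⟨Nat.prime_of_mem_primeFactors (Finset.mem_of_mem_erase hp), Finset.ne_of_mem_erase hp⟩
  have hs : ∀ i ∈ t, (id i : ℕ) ≠ 0 := by
    intro i hi
    rcases Finset.mem_insert.mp hi with rfl | hi
    · norm_num
    · exact (hSprime i hi).1.pos.ne'
  have hpp : Set.Pairwise (t : Set ℕ) (Function.onFun Nat.Coprime id) := by
    intro x hx y hy hxy
    have hx : x = 8 ∨ x ∈ S := Finset.mem_insert.mp (Finset.mem_coe.mp hx)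
    have hy : y = 8 ∨ y ∈ S := Finset.mem_insert.mp (Finset.mem_coe.mp hy)
    have odd_cop : ∀ q ∈ S, Nat.Coprime 8 q := by
      intro q hq
      obtain ⟨hq1, hq2⟩ := hSprime q hq
      have : Nat.Coprime 2 q := (Nat.coprime_primes Nat.prime_two hq1).mpr (Ne.symm hq2)
      simpa using this.pow_left 3
    obtain rfl | hx := hx <;> obtain rfl | hy := hy
    · exact absurd rfl hxy
    · exact odd_cop y hy
    · exact (odd_cop x hx).symm
    · exact (Nat.coprime_primes (hSprime x hx).1 (hSprime y hy).1).mpr hxy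
  set K := Nat.chineseRemainderOfFinset a id t hs hpp with hK
  set L : ℕ := (K : ℕ) with hLdef
  have hL : ∀ i ∈ t, L ≡ a i [MOD id i] := K.prop
  have hL8 : L % 8 = c8 := by
    have h1 : L % 8 = a 8 % 8 := hL 8 (Finset.mem_insert_self _ _)
    have ha8 : a 8 = c8 := by
      rw [ha]
      simp only [dif_neg (by norm_num : ¬ ((8:ℕ).Prime ∧ (8:ℕ) ≠ 2 ∧ 8 ∣ D)), if_pos rfl,
        if_true]
    rw [h1, ha8, hc8]
    split <;> norm_num
  have hLpos : 0 < L := by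
    have hc : c8 = 5 ∨ c8 = 1 := by rw [hc8]; split <;> simp
    omega
  -- membership of odd primes dividing D*N
  have hmem : ∀ p : ℕ, p.Prime → p ≠ 2 → p ∣ D * N → p ∈ S := by
    intro p hp hp2 hdvd
    exact Finset.mem_erase.mpr ⟨hp2, Nat.mem_primeFactors.mpr ⟨hp, hdvd, hDN⟩⟩
  -- the cast of L mod p
  have hcast : ∀ p ∈ S, ((L : ZMod p)) = ((a p : ZMod p)) := by
    intro p hpS
    have := hL p (Finset.mem_insert_of_mem hpS)
    exact (ZMod.natCast_eq_natCast_iff _ _ _).mpr this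
  refine ⟨L, hLpos, ?_, ?_, ?_, ?_, ?_⟩
  · -- L < 8 * D * N
    have h1 : L < ∏ i ∈ t, (id i : ℕ) := Nat.chineseRemainderOfFinset_lt_prod a id hs hpp
    have h2 : (∏ i ∈ t, (id i : ℕ)) = 8 * ∏ i ∈ S, i := by
      rw [ht, Finset.prod_insert h8S]; rfl
    have h3 : (∏ i ∈ S, i) ∣ D * N := by
      refine dvd_trans (Finset.prod_dvd_prod_of_subset _ _ _ (Finset.erase_subset _ _)) ?_
      exact Nat.prod_primeFactors_dvd (D * N)
    have h4 : (∏ i ∈ S, i) ≤ D * N := Nat.le_of_dvd (Nat.pos_of_ne_zero hDN) h3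
    calc L < 8 * ∏ i ∈ S, i := h2 ▸ h1
      _ ≤ 8 * (D * N) := by omega
      _ = 8 * D * N := by ring
  · -- nonresidue for odd primes dividing D
    intro p hp hodd hpD
    haveI : Fact p.Prime := ⟨hp⟩
    have hp2 : p ≠ 2 := by rintro rfl; simp [Nat.odd_iff] at hodd
    have hpS : p ∈ S := hmem p hp hp2 (hpD.mul_right N)
    have hcond : p.Prime ∧ p ≠ 2 ∧ p ∣ D := ⟨hp, hp2, hpD⟩
    have hap : a p = (exists_nonsquare_nat p hp hp2).choose := by
      rw [ha]; simp only [dif_pos hcond]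
    have hspec := (exists_nonsquare_nat p hp hp2).choose_spec
    rw [legendreSym.eq_neg_one_iff']
    rw [hcast p hpS, hap]
    exact hspec.2
  · -- residue 1 for odd primes dividing N
    intro p hp hodd hpN
    haveI : Fact p.Prime := ⟨hp⟩
    have hp2 : p ≠ 2 := by rintro rfl; simp [Nat.odd_iff] at hodd
    have hpS : p ∈ S := hmem p hp hp2 (hpN.mul_left D)
    have hpD : ¬ p ∣ D := by
      intro h
      have : p ∣ Nat.gcd D N := Nat.dvd_gcd h hpN
      rw [hgcd] at this
      have := Nat.le_of_dvd one_pos this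
      have := hp.one_lt
      omega
    have hap : a p = 1 := by
      rw [ha]
      simp only [dif_neg (by tauto : ¬ (p.Prime ∧ p ≠ 2 ∧ p ∣ D))]
      rw [if_neg (by rintro rfl; norm_num at hp)]
    have hcastp : ((L : ZMod p)) = 1 := by rw [hcast p hpS, hap, Nat.cast_one]
    rw [legendreSym.eq_one_iff' p (by rw [hcastp]; exact one_ne_zero), hcastp]
    exact IsSquare.one
  · intro h2D
    rw [hL8, hc8, if_pos h2D]
  · intro h2D
    rw [hL8, hc8, if_neg h2D]
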